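/- Given an (n,m)-system with decomposition data and a family of private pairs with distinct anchors per set, let g ∈ G. Then: (1) if some pair p_i^{(j)} of the family is problematic with anchor g, then 1 ≤ |I_g| ≤ 2; (2) if |I_g| = 2, then at most two pairs of the family are problematic with anchor g; (3) if I_g = {z} for a single index z, then every pair p_i^{(j)} of the family that is problematic with anchor g satisfies either i = z (and at most one pair of the family with i = z has anchor g), or its non-anchor is a kernel vertex a_z^{(β)} for some β, which lies in V \ N_z. -/

import Mathlib

open Finset

/-- An `(n,m)`-system: a collection `N 1, …, N ℓ` of distinct `k`-element subsets of a
finite vertex set `V` of cardinality `n`, covering `V`, with `ℓ ≥ 2`, `k ≥ 3`,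
satisfying the minimal-empty-intersection property (i) and the clique property (ii). -/
structure NMSystem (α : Type*) [DecidableEq α] where
  ell : ℕ
  k : ℕ
  V : Finset α
  N : Fin ell → Finset α
  h_ell : 2 ≤ ell
  h_k : 3 ≤ k
  h_inj : Function.Injective N
  h_card : ∀ i, (N i).card = k
  h_sub : ∀ i, N i ⊆ V
  h_cover : ∀ v ∈ V, ∃ i, v ∈ N i
  h_empty_inter : ∀ v : α, ¬ (∀ i, v ∈ N i)
  h_min : ∀ i, ∃ v, ∀ j, j ≠ i → v ∈ N j
  h_clique : ∀ S ⊆ V, k + 1 ≤ S.card → ∃ T ⊆ S, T.card = 3 ∧ ∀ i, ¬ T ⊆ N i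

namespace NMSystem

variable {α : Type*} [DecidableEq α]

/-- the number of vertices `n` -/
def n (S : NMSystem α) : ℕ := S.V.card

/-- the parameter `m = n - k` -/
def m (S : NMSystem α) : ℕ := S.n - S.k

end NMSystem

/-- Decomposition data for an `(n,m)`-system: stage numbers `t i` (weakly decreasing in `i`)
with at least `4` surviving sets at each stage `j ≤ t = t 0`, together with pairwise
distinct kernel vertices `a i s` (for `s ≤ t i`) satisfying `a i s ∉ N i` and
`a i s ∈ N r` for every `r ≠ i` with `s ≤ t r`. -/
structure Decomp {α : Type*} [DecidableEq α] (S : NMSystem α) where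
  t : Fin S.ell → ℕ
  a : Fin S.ell → ℕ → α
  h_mono : ∀ i j : Fin S.ell, i ≤ j → t j ≤ t i
  h_stages : ∀ j : ℕ, j ≤ t ⟨0, Nat.lt_of_lt_of_le Nat.zero_lt_two S.h_ell⟩ →
      4 ≤ (Finset.univ.filter (fun i => j ≤ t i)).card
  h_a_mem : ∀ i s, s ≤ t i → a i s ∈ S.V
  h_a_not : ∀ i s, s ≤ t i → a i s ∉ S.N i
  h_a_in : ∀ i s, s ≤ t i → ∀ r, r ≠ i → s ≤ t r → a i s ∈ S.N r
  h_a_inj : ∀ i s i' s', s ≤ t i → s' ≤ t i' → (i ≠ i' ∨ s ≠ s') → a i s ≠ a i' s'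

namespace Decomp

variable {α : Type*} [DecidableEq α] {S : NMSystem α} (D : Decomp S)

/-- the total number of stages `t = t_1` -/
def T : ℕ := D.t ⟨0, Nat.lt_of_lt_of_le Nat.zero_lt_two S.h_ell⟩

/-- the set `A` of all kernel vertices -/
def A : Finset α :=
  Finset.univ.biUnion (fun i => (Finset.range (D.t i + 1)).image (D.a i))

/-- the set `G = V \ A` of garbage vertices -/
def G : Finset α := S.V \ D.A

/-- the critical time `t_g` of a vertex `g` -/
def tg (g : α) : ℕ := (Finset.univ.filter (fun i => g ∈ S.N i)).sup D.t

/-- the critical index set `I_g` of a vertex `g` -/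
def Ig (g : α) : Finset (Fin S.ell) :=
  Finset.univ.filter (fun i => g ∈ S.N i ∧ D.t i = D.tg g)

/-- the set `Γ_x` of critical garbage vertices of `N x` -/
def Gamma (x : Fin S.ell) : Finset α := D.G.filter (fun g => D.Ig g = {x})

/-- `v` is a private vertex for `N i` at time `j` -/
def IsPrivateVertex (i : Fin S.ell) (j : ℕ) (v : α) : Prop :=
  v ∈ S.N i ∧ ∀ r, r ≠ i → j ≤ D.t r → v ∉ S.N r

/-- `p` is a private pair for `N i` at time `j` -/
def IsPrivatePair (i : Fin S.ell) (j : ℕ) (p : Finset α) : Prop :=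
  p ⊆ S.N i ∧ p.card = 2 ∧ ∀ r, r ≠ i → j ≤ D.t r → ¬ p ⊆ S.N r

/-- `C` is a `3`-cross of `N i` at time `j` with respect to `Y` -/
def IsThreeCross (i : Fin S.ell) (j : ℕ) (Y C : Finset α) : Prop :=
  C.card = 3 ∧ C ⊆ (S.N i ∪ (Finset.range (j + 1)).image (D.a i)) \ Y ∧
    ∀ r, ¬ C ⊆ S.N r

end Decomp

/-- A family of private pairs with distinct anchors per set: for every `i` and every
stage `j ≤ t i` a private pair `p i j` for `N i` at time `j` together with a designated
anchor `g i j ∈ p i j ∩ G`, such that for fixed `i` the anchors are pairwise distinct. -/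
structure PPFamily {α : Type*} [DecidableEq α] {S : NMSystem α} (D : Decomp S) where
  p : Fin S.ell → ℕ → Finset α
  g : Fin S.ell → ℕ → α
  h_priv : ∀ i j, j ≤ D.t i → D.IsPrivatePair i j (p i j)
  h_anchor_mem : ∀ i j, j ≤ D.t i → g i j ∈ p i j
  h_anchor_G : ∀ i j, j ≤ D.t i → g i j ∈ D.G
  h_anchor_inj : ∀ i j j', j ≤ D.t i → j' ≤ D.t i → j ≠ j' → g i j ≠ g i j'

namespace PPFamily

variable {α : Type*} [DecidableEq α] {S : NMSystem α} {D : Decomp S} (F : PPFamily D)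

/-- the pair `p i j` of the family is problematic with non-anchor `a x y` -/
def ProblematicWith (i : Fin S.ell) (j : ℕ) (x : Fin S.ell) (y : ℕ) : Prop :=
  y < D.t x ∧ j ≤ y ∧ F.g i j ∈ S.N x ∧ F.p i j = {F.g i j, D.a x y}

/-- the pair `p i j` of the family is problematic -/
def Problematic (i : Fin S.ell) (j : ℕ) : Prop :=
  ∃ x y, F.ProblematicWith i j x y

end PPFamily

section Aux

variable {α : Type*} [DecidableEq α] {S : NMSystem α} {D : Decomp S} (F : PPFamily D)

/-- `x` is an index realizing `g ∈ N x`, so `t x ≤ tg g`. -/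
lemma tg_ge {g : α} {x : Fin S.ell} (hx : g ∈ S.N x) : D.t x ≤ D.tg g :=
  Finset.le_sup (by simp [hx])

/-- Key lemma: for a problematic pair with anchor `g`, `I_g ⊆ {i, x}`. -/
lemma Ig_subset_of_problematic {g : α} {i x : Fin S.ell} {j y : ℕ}
    (hji : j ≤ D.t i) (hp : F.ProblematicWith i j x y) (hgi : F.g i j = g) :
    D.Ig g ⊆ {i, x} := by
  obtain ⟨hylt, hjy, hgNx, hpair⟩ := hp
  rw [hgi] at hgNx hpair
  intro r hr
  rw [Decomp.Ig, Finset.mem_filter] at hr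
  obtain ⟨-, hgr, htr⟩ := hr
  by_contra hrn
  simp only [Finset.mem_insert, Finset.mem_singleton, not_or] at hrn
  obtain ⟨hri, hrx⟩ := hrn
  have hyx : y ≤ D.t x := le_of_lt hylt
  have hytr : y ≤ D.t r := by
    have h1 : D.t x ≤ D.tg g := tg_ge hgNx
    omega
  have haNr : D.a x y ∈ S.N r := D.h_a_in x y hyx r hrx hytr
  have hnot := (F.h_priv i j hji).2.2 r hri (le_trans hjy hytr)
  apply hnot
  rw [hpair]
  intro v hv
  rcases Finset.mem_insert.mp hv with h | h
  · rwa [h]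
  · rw [Finset.mem_singleton.mp h]; exact haNr

/-- `I_g` is nonempty for any vertex of `V`. -/
lemma Ig_nonempty {g : α} (hg : g ∈ S.V) : (D.Ig g).Nonempty := by
  obtain ⟨i0, hi0⟩ := S.h_cover g hg
  have hne : (Finset.univ.filter (fun i => g ∈ S.N i)).Nonempty :=
    ⟨i0, by simp [hi0]⟩
  obtain ⟨i, hi, hieq⟩ := Finset.exists_mem_eq_sup _ hne D.t
  refine ⟨i, ?_⟩
  rw [Decomp.Ig, Finset.mem_filter]
  simp only [Finset.mem_filter] at hi
  exact ⟨Finset.mem_univ i, hi.2, hieq.symm⟩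

end Aux

open scoped Classical in
/-- for a garbage vertex `g`: (1) if some pair of the family is
problematic with anchor `g`, then `1 ≤ |I_g| ≤ 2`; (2) if `|I_g| = 2`, then at most two
pairs of the family are problematic with anchor `g`; (3) if `I_g = {z}`, then every pair
of the family problematic with anchor `g` either belongs to `N z` (and at most one pair
for `N z` has anchor `g`), or has non-anchor a kernel vertex `a z β ∈ V \ N z`. -/
theorem anchor_trichotomy {α : Type*} [DecidableEq α]
    (S : NMSystem α) (D : Decomp S) (F : PPFamily D) (g : α) (hg : g ∈ D.G) :
    ((∃ i j, j ≤ D.t i ∧ F.Problematic i j ∧ F.g i j = g) →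
      1 ≤ (D.Ig g).card ∧ (D.Ig g).card ≤ 2) ∧
    ((D.Ig g).card = 2 →
      ((((Finset.univ : Finset (Fin S.ell)).sigma fun i => Finset.range (D.t i + 1)).filter
          (fun q => F.Problematic q.1 q.2 ∧ F.g q.1 q.2 = g)).card ≤ 2)) ∧
    (∀ z : Fin S.ell, D.Ig g = {z} →
      ∀ i x : Fin S.ell, ∀ j y : ℕ, j ≤ D.t i → F.ProblematicWith i j x y →
        F.g i j = g →
        (i = z ∧
          (((Finset.range (D.t z + 1)).filter (fun j' => F.g z j' = g)).card ≤ 1)) ∨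
        (x = z ∧ D.a x y ∈ S.V \ S.N z)) := by
  have hgV : g ∈ S.V := (Finset.mem_sdiff.mp hg).1
  refine ⟨?_, ?_, ?_⟩
  · rintro ⟨i, j, hji, ⟨x, y, hp⟩, hgi⟩
    have hsub := Ig_subset_of_problematic F hji hp hgi
    constructor
    · exact Finset.card_pos.mpr (Ig_nonempty hgV)
    · calc (D.Ig g).card ≤ ({i, x} : Finset (Fin S.ell)).card :=
            Finset.card_le_card hsub
        _ ≤ 2 := Finset.card_insert_le _ _ |>.trans (by simp)
  · intro hcard2
    refine le_trans (Finset.card_le_card_of_injOn (fun q => q.1) ?_ ?_) hcard2.le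
    · rintro ⟨i, j⟩ hq
      simp only [Finset.mem_coe, Finset.mem_filter, Finset.mem_sigma, Finset.mem_univ, true_and,
        Finset.mem_range] at hq
      obtain ⟨hjle, ⟨x, y, hp⟩, hgi⟩ := hq
      have hji : j ≤ D.t i := Nat.lt_succ_iff.mp hjle
      have hsub := Ig_subset_of_problematic F hji hp hgi
      have heq : D.Ig g = {i, x} := by
        apply Finset.eq_of_subset_of_card_le hsub
        calc ({i, x} : Finset (Fin S.ell)).card ≤ 2 :=
              Finset.card_insert_le _ _ |>.trans (by simp)
          _ = (D.Ig g).card := hcard2.symm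
      rw [heq]; exact Finset.mem_insert_self _ _
    · rintro ⟨i, j⟩ hq ⟨i', j'⟩ hq' heq
      simp only at heq
      subst heq
      simp only [Finset.mem_coe, Finset.mem_filter, Finset.mem_sigma, Finset.mem_univ,
        true_and, Finset.mem_range] at hq hq'
      have : j = j' := by
        by_contra hne
        exact F.h_anchor_inj i j j' (Nat.lt_succ_iff.mp hq.1) (Nat.lt_succ_iff.mp hq'.1)
          hne (hq.2.2.trans hq'.2.2.symm)
      subst this; rfl
  · intro z hz i x j y hji hp hgi
    have hsub := Ig_subset_of_problematic F hji hp hgi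
    have hzmem : z ∈ ({i, x} : Finset (Fin S.ell)) := hsub (by rw [hz]; simp)
    by_cases hiz : i = z
    · left
      refine ⟨hiz, Finset.card_le_one.mpr ?_⟩
      intro a ha b hb
      simp only [Finset.mem_filter, Finset.mem_range] at ha hb
      by_contra hne
      exact F.h_anchor_inj z a b (Nat.lt_succ_iff.mp ha.1) (Nat.lt_succ_iff.mp hb.1)
        hne (ha.2.trans hb.2.symm)
    · right
      have hxz : x = z := by
        rcases Finset.mem_insert.mp hzmem with h | h
        · exact absurd h.symm hiz
        · exact (Finset.mem_singleton.mp h).symm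
      have hyx : y ≤ D.t x := le_of_lt hp.1
      refine ⟨hxz, Finset.mem_sdiff.mpr ⟨D.h_a_mem x y hyx, ?_⟩⟩
      rw [← hxz]; exact D.h_a_not x y hyx
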